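/- The sequence C_n/n is non-increasing along even indices and non-decreasing along odd indices: for every even integer n ≥ 4, C_{n+2}/(n+2) ≤ C_n/n, and for every odd integer n ≥ 3, C_{n+2}/(n+2) ≥ C_n/n. -/

import Mathlib

/-- `Lseg n = Σ_{k=1}^{n} (−1)^{k+1} (2^{k−1}/k!) (n−k+1)`, the expected number of
transmissions in one slot from a fully occupied segment of `n` nodes (so `Lseg 0 = 0`). -/
noncomputable def Lseg (n : ℕ) : ℝ :=
  ∑ k ∈ Finset.Icc 1 n,
    (-1 : ℝ) ^ (k + 1) * (2 ^ (k - 1) / (Nat.factorial k : ℝ)) * ((n : ℝ) - (k : ℝ) + 1)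

/-- `C_k = 1 + L_{k−3}`, the expected number of transmissions in one slot from a fully
occupied circle of `k ≥ 3` nodes. -/
noncomputable def Ccirc (k : ℕ) : ℝ := 1 + Lseg (k - 3)

/-- Partial sums of the series for `e^{-2}`. -/
noncomputable def Pp (n : ℕ) : ℝ := ∑ k ∈ Finset.range n, (-2 : ℝ) ^ k / (Nat.factorial k : ℝ)

lemma Pp_succ (n : ℕ) : Pp (n + 1) = Pp n + (-2 : ℝ) ^ n / (Nat.factorial n : ℝ) :=
  Finset.sum_range_succ _ n

lemma S_closed (n : ℕ) :
    ∑ k ∈ Finset.Icc 1 n, (-1 : ℝ) ^ (k + 1) * (2 ^ (k - 1) / (Nat.factorial k : ℝ))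
      = (1 - Pp (n + 1)) / 2 := by
  induction n with
  | zero => simp [Pp]
  | succ n ih =>
    rw [Finset.sum_Icc_succ_top (by omega : 1 ≤ n + 1), ih, Pp_succ (n + 1)]
    have h1 : ((Nat.factorial (n+1) : ℝ)) ≠ 0 := by
      exact_mod_cast Nat.factorial_ne_zero (n+1)
    have h2 : (n + 1) - 1 = n := by omega
    rw [h2]
    have hneg : (-2 : ℝ) ^ (n+1) = (-1)^(n+1) * 2^(n+1) := by
      rw [← neg_one_mul, mul_pow]
    rw [hneg]
    field_simp
    ring

lemma Lseg_succ (n : ℕ) :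
    Lseg (n + 1) = Lseg n +
      ∑ k ∈ Finset.Icc 1 (n + 1), (-1 : ℝ) ^ (k + 1) * (2 ^ (k - 1) / (Nat.factorial k : ℝ)) := by
  rw [Lseg, Lseg, Finset.sum_Icc_succ_top (by omega : 1 ≤ n + 1),
    Finset.sum_Icc_succ_top (by omega : 1 ≤ n + 1), ← add_assoc, ← Finset.sum_add_distrib]
  push_cast
  congr 1
  · apply Finset.sum_congr rfl
    intro k hk
    ring
  · ring

lemma Lseg_closed (n : ℕ) : Lseg n = ((n : ℝ) + 1) * (1 - Pp (n + 1)) / 2 - Pp n := by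
  induction n with
  | zero => simp [Lseg, Pp]
  | succ n ih =>
    rw [Lseg_succ, ih, S_closed, Pp_succ (n+1), Pp_succ n]
    have h0 : ((Nat.factorial n : ℝ)) ≠ 0 := by exact_mod_cast Nat.factorial_ne_zero n
    have hf : (Nat.factorial (n+1) : ℝ) = ((n:ℝ)+1) * (Nat.factorial n : ℝ) := by
      rw [Nat.factorial_succ]; push_cast; ring
    have h1 : ((n:ℝ)+1) ≠ 0 := by positivity
    rw [hf]
    push_cast
    field_simp
    ring

lemma key (m : ℕ) :
    ((m : ℝ) + 3) * Ccirc (m + 5) - ((m : ℝ) + 5) * Ccirc (m + 3)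
      = 2 * (-2 : ℝ) ^ m / (((m : ℝ) + 2) * (Nat.factorial m : ℝ)) := by
  have e1 : (m + 5) - 3 = m + 2 := by omega
  have e2 : (m + 3) - 3 = m := by omega
  rw [Ccirc, Ccirc, e1, e2, Lseg_closed, Lseg_closed,
    Pp_succ (m+2), Pp_succ (m+1), Pp_succ m]
  have hm : ((Nat.factorial m : ℝ)) ≠ 0 := by exact_mod_cast Nat.factorial_ne_zero m
  have hf1 : (Nat.factorial (m+1) : ℝ) = ((m:ℝ)+1) * (Nat.factorial m : ℝ) := by
    rw [Nat.factorial_succ]; push_cast; ring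
  have hf2 : (Nat.factorial (m+2) : ℝ) = ((m:ℝ)+2) * (Nat.factorial (m+1) : ℝ) := by
    have h : Nat.factorial (m+2) = (m+2) * Nat.factorial (m+1) := Nat.factorial_succ (m+1)
    rw [h]; push_cast; ring
  rw [hf2, hf1]
  have h1 : ((m:ℝ)+1) ≠ 0 := by positivity
  have h2 : ((m:ℝ)+2) ≠ 0 := by positivity
  push_cast
  field_simp
  ring

/-- `C_n/n` is non-increasing along even indices `n ≥ 4` and non-decreasing along odd
indices `n ≥ 3`. -/
theorem Ccirc_div_monotone (n : ℕ) :
    (4 ≤ n → Even n → Ccirc (n + 2) / ((n : ℝ) + 2) ≤ Ccirc n / (n : ℝ)) ∧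
    (3 ≤ n → Odd n → Ccirc (n + 2) / ((n : ℝ) + 2) ≥ Ccirc n / (n : ℝ)) := by
  constructor
  · intro hn hev
    obtain ⟨m, rfl⟩ : ∃ m, n = m + 3 := ⟨n - 3, by omega⟩
    have hmodd : Odd m := by
      rcases hev with ⟨j, hj⟩
      exact ⟨j - 2, by omega⟩
    have hk := key m
    have hpow : (-2 : ℝ) ^ m < 0 := Odd.pow_neg hmodd (by norm_num : (-2:ℝ) < 0)
    have hden : (0:ℝ) < ((m : ℝ) + 2) * (Nat.factorial m : ℝ) := by
      have : (0:ℝ) < (Nat.factorial m : ℝ) := by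
        exact_mod_cast Nat.factorial_pos m
      positivity
    have hneg : ((m : ℝ) + 3) * Ccirc (m + 5) - ((m : ℝ) + 5) * Ccirc (m + 3) ≤ 0 := by
      rw [hk]
      exact le_of_lt (div_neg_of_neg_of_pos (by linarith) hden)
    have e : m + 3 + 2 = m + 5 := by omega
    rw [e, div_le_div_iff₀ (by push_cast; positivity) (by push_cast; positivity)]
    push_cast
    linarith
  · intro hn hodd
    obtain ⟨m, rfl⟩ : ∃ m, n = m + 3 := ⟨n - 3, by omega⟩
    have hmev : Even m := by
      rcases hodd with ⟨j, hj⟩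
      exact ⟨j - 1, by omega⟩
    have hk := key m
    have hpow : (0:ℝ) ≤ (-2 : ℝ) ^ m := hmev.pow_nonneg _
    have hden : (0:ℝ) < ((m : ℝ) + 2) * (Nat.factorial m : ℝ) := by
      have : (0:ℝ) < (Nat.factorial m : ℝ) := by
        exact_mod_cast Nat.factorial_pos m
      positivity
    have hpos : 0 ≤ ((m : ℝ) + 3) * Ccirc (m + 5) - ((m : ℝ) + 5) * Ccirc (m + 3) := by
      rw [hk]
      positivity
    have e : m + 3 + 2 = m + 5 := by omega
    rw [ge_iff_le, e, div_le_div_iff₀ (by push_cast; positivity) (by push_cast; positivity)]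
    push_cast
    linarith
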